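/- If f = h + conj(g) with h, g holomorphic on the unit disk, then for any circle C of center z₀, radius ρ, contained in 𝔻, ∫₀^{2π} |f(z₀ + ρe^{it})|² dt = ∫₀^{2π} |h(z₀ + ρe^{it})|² dt + ∫₀^{2π} |g(z₀ + ρe^{it})|² dt + 4π Re(h(z₀) g(z₀)). -/

import Mathlib

open Complex Metric intervalIntegral
open scoped Real

/-- For `f = h + conj g` with `h, g` holomorphic on the unit disk and a circle of center
`z₀`, radius `ρ`, contained in the disk:
`∫₀^{2π} |f|² dt = ∫₀^{2π} |h|² dt + ∫₀^{2π} |g|² dt + 4π Re(h(z₀) g(z₀))`. -/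
theorem stmt7 (h g f : ℂ → ℂ)
    (hh : DifferentiableOn ℂ h (ball (0 : ℂ) 1))
    (hg : DifferentiableOn ℂ g (ball (0 : ℂ) 1))
    (hf : ∀ z ∈ ball (0 : ℂ) 1, f z = h z + (starRingEnd ℂ) (g z))
    (z₀ : ℂ) (ρ : ℝ) (hρ : 0 < ρ) (hsub : closedBall z₀ ρ ⊆ ball (0 : ℂ) 1) :
    ∫ t in (0 : ℝ)..(2 * π),
        ‖f (z₀ + (ρ : ℂ) * Complex.exp ((t : ℂ) * I))‖ ^ 2 =
      (∫ t in (0 : ℝ)..(2 * π),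
        ‖h (z₀ + (ρ : ℂ) * Complex.exp ((t : ℂ) * I))‖ ^ 2) +
      (∫ t in (0 : ℝ)..(2 * π),
        ‖g (z₀ + (ρ : ℂ) * Complex.exp ((t : ℂ) * I))‖ ^ 2) +
      4 * π * (h z₀ * g z₀).re := by
  -- notation for the circle parametrization
  set γ : ℝ → ℂ := fun t => z₀ + (ρ : ℂ) * Complex.exp ((t : ℂ) * I) with hγ
  have hγeq : γ = circleMap z₀ ρ := by
    funext t; simp [hγ, circleMap, Complex.ofReal_mul]
  have hmem : ∀ t : ℝ, γ t ∈ closedBall z₀ ρ := by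
    intro t; rw [hγeq]
    exact sphere_subset_closedBall (circleMap_mem_sphere z₀ hρ.le t)
  have hmem' : ∀ t : ℝ, γ t ∈ ball (0 : ℂ) 1 := fun t => hsub (hmem t)
  -- continuity of compositions
  have hγc : Continuous γ := by rw [hγeq]; exact continuous_circleMap z₀ ρ
  have hhc : Continuous fun t => h (γ t) :=
    hh.continuousOn.comp_continuous hγc (fun t => hmem' t)
  have hgc : Continuous fun t => g (γ t) :=
    hg.continuousOn.comp_continuous hγc (fun t => hmem' t)
  -- integrability
  have ih : IntervalIntegrable (fun t => ‖h (γ t)‖ ^ 2) MeasureTheory.volume 0 (2*π) :=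
    (Continuous.pow (continuous_norm.comp hhc) 2).intervalIntegrable _ _
  have ig : IntervalIntegrable (fun t => ‖g (γ t)‖ ^ 2) MeasureTheory.volume 0 (2*π) :=
    (Continuous.pow (continuous_norm.comp hgc) 2).intervalIntegrable _ _
  have icr : IntervalIntegrable (fun t => (h (γ t) * g (γ t)).re) MeasureTheory.volume 0 (2*π) :=
    (Complex.continuous_re.comp (hhc.mul hgc)).intervalIntegrable _ _
  -- pointwise identity
  have hpt : ∀ t : ℝ, ‖f (γ t)‖ ^ 2 =
      ‖h (γ t)‖ ^ 2 + ‖g (γ t)‖ ^ 2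
        + 2 * (h (γ t) * g (γ t)).re := by
    intro t
    rw [hf _ (hmem' t)]
    rw [Complex.sq_norm, Complex.sq_norm, Complex.sq_norm, Complex.normSq_add]
    simp
  -- Cauchy integral formula for h*g
  have hd : DifferentiableOn ℂ (fun z => h z * g z) (closedBall z₀ ρ) :=
    ((hh.mono hsub).mul (hg.mono hsub))
  have hcauchy := hd.circleIntegral_sub_inv_smul (f := fun z => h z * g z)
      (mem_ball_self hρ)
  rw [circleIntegral] at hcauchy
  simp only [smul_eq_mul] at hcauchy
  have hint : (∫ t in (0:ℝ)..(2*π), I * (h (γ t) * g (γ t))) =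
      (2 * π * I : ℂ) * (h z₀ * g z₀) := by
    rw [← hcauchy]
    congr 1
    funext t
    rw [deriv_circleMap, circleMap_sub_center]
    have hne : circleMap 0 ρ t ≠ 0 := by
      simpa using circleMap_ne_center (c := (0:ℂ)) hρ.ne' (θ := t)
    rw [← hγeq]
    field_simp
  have hint2 : (∫ t in (0:ℝ)..(2*π), (h (γ t) * g (γ t))) = (2 * π : ℂ) * (h z₀ * g z₀) := by
    rw [intervalIntegral.integral_const_mul] at hint
    apply mul_left_cancel₀ I_ne_zero
    rw [hint]; ring
  -- integrability of the complex product
  have imul : IntervalIntegrable (fun t => h (γ t) * g (γ t)) MeasureTheory.volume 0 (2*π) :=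
    (hhc.mul hgc).intervalIntegrable _ _
  have hre : (∫ t in (0:ℝ)..(2*π), (h (γ t) * g (γ t)).re) = 2 * π * (h z₀ * g z₀).re := by
    have := Complex.reCLM.intervalIntegral_comp_comm imul
    simp only [Complex.reCLM_apply] at this
    rw [this, hint2]
    simp [Complex.ofReal_mul]
  calc (∫ t in (0:ℝ)..(2*π), ‖f (γ t)‖ ^ 2)
      = ∫ t in (0:ℝ)..(2*π), (‖h (γ t)‖ ^ 2 + ‖g (γ t)‖ ^ 2
          + 2 * (h (γ t) * g (γ t)).re) :=
        intervalIntegral.integral_congr (fun t _ => hpt t)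
    _ = (∫ t in (0:ℝ)..(2*π), ‖h (γ t)‖ ^ 2)
          + (∫ t in (0:ℝ)..(2*π), ‖g (γ t)‖ ^ 2)
          + 4 * π * (h z₀ * g z₀).re := by
        rw [intervalIntegral.integral_add (ih.add ig) (icr.const_mul 2),
          intervalIntegral.integral_add ih ig, intervalIntegral.integral_const_mul, hre]
        ring
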